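/- The number of common complex roots of the family { p_{m,n} : m+n = e+1 } of sl_3 Chebyshev polynomials (i.e. the number of points in the vanishing set V_e ⊂ ℂ²) is exactly the triangular number t_e = (e+1)(e+2)/2. -/

import Mathlib

open MvPolynomial

/-- The defining conditions of the `sl₃` Chebyshev-like polynomials `p_{m,n} ∈ ℤ[X,Y]`. -/
def IsSl3Cheb (p : ℤ → ℤ → MvPolynomial (Fin 2) ℤ) : Prop :=
  (∀ m n : ℤ, m < 0 ∨ n < 0 → p m n = 0) ∧
  p 0 0 = 1 ∧ p 1 0 = X 0 ∧ p 0 1 = X 1 ∧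
  (∀ m n : ℤ, 0 ≤ m → 0 ≤ n →
    X 0 * p m n = p (m + 1) n + p (m - 1) (n + 1) + p m (n - 1)) ∧
  (∀ m n : ℤ, 0 ≤ m → 0 ≤ n →
    X 1 * p m n = p m (n + 1) + p (m + 1) (n - 1) + p (m - 1) n)

section Roots
open Complex

noncomputable def om (M : ℕ) : ℂ := Complex.exp (2 * Real.pi * I / M)

lemma om_ne_zero (M : ℕ) : om M ≠ 0 := Complex.exp_ne_zero _

lemma om_zpow (M : ℕ) (s : ℤ) : om M ^ s = Complex.exp (s * (2 * Real.pi * I / M)) := by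
  rw [om, ← Complex.exp_int_mul]

lemma om_zpow_eq_iff (M : ℕ) (hM : 0 < M) (s t : ℤ) :
    om M ^ s = om M ^ t ↔ (M : ℤ) ∣ s - t := by
  rw [om_zpow, om_zpow, Complex.exp_eq_exp_iff_exists_int]
  have hMc : (M : ℂ) ≠ 0 := Nat.cast_ne_zero.mpr hM.ne'
  have hpi : (2 * Real.pi * I : ℂ) ≠ 0 := by
    simp [Real.pi_ne_zero, Complex.I_ne_zero]
  constructor
  · rintro ⟨n, hn⟩
    refine ⟨n, ?_⟩
    have h1 : ((s : ℂ) - t) * (2 * Real.pi * I) = (n * M) * (2 * Real.pi * I) := by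
      field_simp at hn
      linear_combination (2 * Real.pi * I) * hn
    have h2 := mul_right_cancel₀ hpi h1
    have h3 : (s : ℂ) - t = (M : ℂ) * n := by rw [h2]; ring
    exact_mod_cast h3
  · rintro ⟨n, hn⟩
    refine ⟨n, ?_⟩
    have hs : s = t + n * M := by linarith [hn]
    have hsc : (s : ℂ) = t + n * M := by exact_mod_cast congrArg (fun x : ℤ => (x : ℂ)) hs
    rw [hsc]; field_simp

def K1 (a b : ℕ) : ℤ := 2*a+b+3
def K2 (a b : ℕ) : ℤ := (b:ℤ) - a
def K3 (a b : ℕ) : ℤ := -((a:ℤ)+2*b+3)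

noncomputable def uu (e a b : ℕ) : ℂ := om (3*(e+3)) ^ K1 a b
noncomputable def vv (e a b : ℕ) : ℂ := om (3*(e+3)) ^ K2 a b
noncomputable def ww (e a b : ℕ) : ℂ := om (3*(e+3)) ^ K3 a b

lemma uu_ne_zero (e a b : ℕ) : uu e a b ≠ 0 := zpow_ne_zero _ (om_ne_zero _)
lemma vv_ne_zero (e a b : ℕ) : vv e a b ≠ 0 := zpow_ne_zero _ (om_ne_zero _)
lemma ww_ne_zero (e a b : ℕ) : ww e a b ≠ 0 := zpow_ne_zero _ (om_ne_zero _)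

lemma uvw_mul (e a b : ℕ) : uu e a b * vv e a b * ww e a b = 1 := by
  rw [uu, vv, ww, ← zpow_add₀ (om_ne_zero _), ← zpow_add₀ (om_ne_zero _)]
  have : K1 a b + K2 a b + K3 a b = 0 := by simp [K1, K2, K3]; ring
  rw [this, zpow_zero]

lemma ne_of_k (e : ℕ) {s t : ℤ} (h1 : 0 < s - t) (h2 : s - t < 3*(e+3)) :
    om (3*(e+3)) ^ s ≠ om (3*(e+3)) ^ t := by
  rw [Ne, om_zpow_eq_iff _ (by positivity)]
  intro hdvd
  have := Int.le_of_dvd h1 hdvd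
  push_cast at this
  omega

lemma uu_ne_vv (e a b : ℕ) (hab : a + b ≤ e) : uu e a b ≠ vv e a b := by
  apply ne_of_k e <;> (unfold K1 K2; omega)

lemma uu_ne_ww (e a b : ℕ) (hab : a + b ≤ e) : uu e a b ≠ ww e a b := by
  apply ne_of_k e <;> (unfold K1 K3; omega)

lemma vv_ne_ww (e a b : ℕ) (hab : a + b ≤ e) : vv e a b ≠ ww e a b := by
  apply ne_of_k e <;> (unfold K2 K3; omega)

lemma uu_pow_N (e a b : ℕ) : uu e a b ^ ((e:ℤ)+3) = vv e a b ^ ((e:ℤ)+3) := by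
  rw [uu, vv, ← zpow_mul, ← zpow_mul, om_zpow_eq_iff _ (by positivity)]
  refine ⟨(a:ℤ)+1, ?_⟩
  unfold K1 K2; push_cast; ring

lemma vv_pow_N (e a b : ℕ) : vv e a b ^ ((e:ℤ)+3) = ww e a b ^ ((e:ℤ)+3) := by
  rw [vv, ww, ← zpow_mul, ← zpow_mul, om_zpow_eq_iff _ (by positivity)]
  refine ⟨(b:ℤ)+1, ?_⟩
  unfold K2 K3; push_cast; ring

noncomputable def ptx (e a b : ℕ) : ℂ := uu e a b + vv e a b + ww e a b
noncomputable def pty (e a b : ℕ) : ℂ :=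
  uu e a b * vv e a b + uu e a b * ww e a b + vv e a b * ww e a b

end Roots

section DDsec

noncomputable def DD (u v w : ℂ) (r s : ℤ) : ℂ :=
  u^r*v^s - u^r*w^s + v^r*w^s - v^r*u^s + w^r*u^s - w^r*v^s

lemma DD_diag (u v w : ℂ) (t : ℤ) : DD u v w t t = 0 := by unfold DD; ring

lemma DD_zero (u v w : ℂ) (r : ℤ) : DD u v w r 0 = 0 := by
  unfold DD; simp

lemma DD_two_one (u v w : ℂ) : DD u v w 2 1 = (u-v)*(u-w)*(v-w) := by
  unfold DD
  simp only [zpow_one, show (2:ℤ) = ((2:ℕ):ℤ) from rfl, zpow_natCast]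
  ring

lemma DD_top {u v w : ℂ} {R : ℤ} (h1 : u^R = v^R) (h2 : v^R = w^R) (s : ℤ) :
    DD u v w R s = 0 := by
  unfold DD; rw [h1, h2]; ring

lemma DD_Xrec {u v w : ℂ} (hu : u ≠ 0) (hv : v ≠ 0) (hw : w ≠ 0)
    (huvw : u * v * w = 1) (r s : ℤ) :
    (u+v+w) * DD u v w r s =
      DD u v w (r+1) s + DD u v w r (s+1) + DD u v w (r-1) (s-1) := by
  have hiu : u⁻¹ = v * w := inv_eq_of_mul_eq_one_right (by rw [← mul_assoc]; exact huvw)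
  have hiv : v⁻¹ = u * w := inv_eq_of_mul_eq_one_right (by linear_combination huvw)
  have hiw : w⁻¹ = u * v := inv_eq_of_mul_eq_one_right (by linear_combination huvw)
  simp only [DD, zpow_add_one₀ hu, zpow_add_one₀ hv, zpow_add_one₀ hw,
    zpow_sub_one₀ hu, zpow_sub_one₀ hv, zpow_sub_one₀ hw, hiu, hiv, hiw]
  linear_combination (-(w*(u^r*v^s) - v*(u^r*w^s) + u*(v^r*w^s) - w*(v^r*u^s) + v*(w^r*u^s) - u*(w^r*v^s))) * huvw

lemma DD_Yrec {u v w : ℂ} (hu : u ≠ 0) (hv : v ≠ 0) (hw : w ≠ 0)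
    (huvw : u * v * w = 1) (r s : ℤ) :
    (u*v+u*w+v*w) * DD u v w r s =
      DD u v w (r+1) (s+1) + DD u v w r (s-1) + DD u v w (r-1) s := by
  have hiu : u⁻¹ = v * w := inv_eq_of_mul_eq_one_right (by rw [← mul_assoc]; exact huvw)
  have hiv : v⁻¹ = u * w := inv_eq_of_mul_eq_one_right (by linear_combination huvw)
  have hiw : w⁻¹ = u * v := inv_eq_of_mul_eq_one_right (by linear_combination huvw)
  simp only [DD, zpow_add_one₀ hu, zpow_add_one₀ hv, zpow_add_one₀ hw,
    zpow_sub_one₀ hu, zpow_sub_one₀ hv, zpow_sub_one₀ hw, hiu, hiv, hiw]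
  ring

end DDsec

lemma cheb_eval_unique {p : ℤ → ℤ → MvPolynomial (Fin 2) ℤ} (hp : IsSl3Cheb p)
    (x y : ℂ) (f : ℤ → ℤ → ℂ)
    (hfneg : ∀ m n : ℤ, m < 0 ∨ n < 0 → f m n = 0)
    (hf0 : f 0 0 = 1)
    (hfX : ∀ m n : ℤ, 0 ≤ m → 0 ≤ n →
      x * f m n = f (m + 1) n + f (m - 1) (n + 1) + f m (n - 1))
    (hfY : ∀ m n : ℤ, 0 ≤ m → 0 ≤ n →
      y * f m n = f m (n + 1) + f (m + 1) (n - 1) + f (m - 1) n) :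
    ∀ m n : ℤ, 0 ≤ m → 0 ≤ n → aeval ![x, y] (p m n) = f m n := by
  obtain ⟨hneg, h00, h10, h01, hX, hY⟩ := hp
  set P : ℤ → ℤ → ℂ := fun m n => aeval ![x, y] (p m n) with hP
  have hPneg : ∀ m n : ℤ, m < 0 ∨ n < 0 → P m n = 0 := by
    intro m n h; simp [hP, hneg m n h]
  have hP00 : P 0 0 = 1 := by simp [hP, h00]
  have hPX : ∀ m n : ℤ, 0 ≤ m → 0 ≤ n →
      x * P m n = P (m + 1) n + P (m - 1) (n + 1) + P m (n - 1) := by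
    intro m n hm hn
    have := congrArg (aeval ![x, y]) (hX m n hm hn)
    simpa [hP] using this
  have hPY : ∀ m n : ℤ, 0 ≤ m → 0 ≤ n →
      y * P m n = P m (n + 1) + P (m + 1) (n - 1) + P (m - 1) n := by
    intro m n hm hn
    have := congrArg (aeval ![x, y]) (hY m n hm hn)
    simpa [hP] using this
  have key : ∀ d : ℕ, ∀ m n : ℤ, 0 ≤ m → 0 ≤ n → m + n ≤ d → P m n = f m n := by
    intro d
    induction d with
    | zero =>
      intro m n hm hn hd
      have : m = 0 ∧ n = 0 := by omega
      rw [this.1, this.2, hP00, hf0]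
    | succ d ih =>
      intro m n hm hn hd
      rcases le_or_gt (m + n) d with h | h
      · exact ih m n hm hn h
      have hmn : m + n = d + 1 := by omega
      rcases lt_or_ge 0 m with hm1 | hm1
      · have h1 := hPX (m - 1) n (by omega) hn
        have h2 := hfX (m - 1) n (by omega) hn
        have e1 : P (m - 1) n = f (m - 1) n := ih _ _ (by omega) hn (by omega)
        have e2 : P (m - 1 - 1) (n + 1) = f (m - 1 - 1) (n + 1) := by
          rcases lt_or_ge (m - 1 - 1) 0 with hc | hc
          · rw [hPneg _ _ (Or.inl hc), hfneg _ _ (Or.inl hc)]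
          · exact ih _ _ hc (by omega) (by omega)
        have e3 : P (m - 1) (n - 1) = f (m - 1) (n - 1) := by
          rcases lt_or_ge (n - 1) 0 with hc | hc
          · rw [hPneg _ _ (Or.inr hc), hfneg _ _ (Or.inr hc)]
          · exact ih _ _ (by omega) hc (by omega)
        have hmm : m - 1 + 1 = m := by ring
        rw [hmm] at h1 h2
        rw [e1] at h1
        linear_combination h2 - h1 - e2 - e3
      · have hm0 : m = 0 := by omega
        subst hm0
        have h1 := hPY 0 (n - 1) le_rfl (by omega)
        have h2 := hfY 0 (n - 1) le_rfl (by omega)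
        have e1 : P 0 (n - 1) = f 0 (n - 1) := ih _ _ le_rfl (by omega) (by omega)
        have e2 : P (0 + 1) (n - 1 - 1) = f (0 + 1) (n - 1 - 1) := by
          rcases lt_or_ge (n - 1 - 1) 0 with hc | hc
          · rw [hPneg _ _ (Or.inr hc), hfneg _ _ (Or.inr hc)]
          · exact ih _ _ (by omega) hc (by omega)
        have e3 : P (0 - 1) (n - 1) = 0 := hPneg _ _ (Or.inl (by omega))
        have e3' : f (0 - 1) (n - 1) = 0 := hfneg _ _ (Or.inl (by omega))
        have hnn : n - 1 + 1 = n := by ring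
        rw [hnn] at h1 h2
        rw [e1] at h1
        linear_combination h2 - h1 - e2 - e3 + e3'
  intro m n hm hn
  exact key (m + n).toNat m n hm hn (by omega)
lemma point_mem (e a b : ℕ) (hab : a + b ≤ e)
    {p : ℤ → ℤ → MvPolynomial (Fin 2) ℤ} (hp : IsSl3Cheb p) :
    ∀ m n : ℕ, m + n = e + 1 →
      aeval ![ptx e a b, pty e a b] (p (m:ℤ) (n:ℤ)) = 0 := by
  set u := uu e a b with hu'
  set v := vv e a b with hv'
  set w := ww e a b with hw'
  have hu : u ≠ 0 := uu_ne_zero e a b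
  have hv : v ≠ 0 := vv_ne_zero e a b
  have hw : w ≠ 0 := ww_ne_zero e a b
  have huvw : u * v * w = 1 := uvw_mul e a b
  have hD21 : DD u v w 2 1 ≠ 0 := by
    rw [DD_two_one]
    exact mul_ne_zero (mul_ne_zero (sub_ne_zero.mpr (uu_ne_vv e a b hab))
      (sub_ne_zero.mpr (uu_ne_ww e a b hab))) (sub_ne_zero.mpr (vv_ne_ww e a b hab))
  set f : ℤ → ℤ → ℂ := fun m n =>
    if m < 0 ∨ n < 0 then 0 else DD u v w (m+n+2) (n+1) / DD u v w 2 1 with hf'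
  have hfneg : ∀ m n : ℤ, m < 0 ∨ n < 0 → f m n = 0 := by
    intro m n h; simp only [hf', if_pos h]
  have hfD : ∀ m n : ℤ, -1 ≤ m → -1 ≤ n →
      f m n = DD u v w (m+n+2) (n+1) / DD u v w 2 1 := by
    intro m n hm hn
    by_cases h : m < 0 ∨ n < 0
    · rw [hfneg m n h]
      rcases h with h | h
      · have hm1 : m = -1 := by omega
        subst hm1
        have : (-1 : ℤ) + n + 2 = n + 1 := by ring
        rw [this, DD_diag, zero_div]
      · have hn1 : n = -1 := by omega
        subst hn1
        have : (-1 : ℤ) + 1 = 0 := by ring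
        rw [this, DD_zero, zero_div]
    · simp only [hf', if_neg h]
  have hf0 : f 0 0 = 1 := by
    rw [hfD 0 0 (by norm_num) (by norm_num)]
    norm_num
    exact hD21
  have hfX : ∀ m n : ℤ, 0 ≤ m → 0 ≤ n →
      ptx e a b * f m n = f (m + 1) n + f (m - 1) (n + 1) + f m (n - 1) := by
    intro m n hm hn
    rw [hfD m n (by omega) (by omega), hfD (m+1) n (by omega) (by omega),
      hfD (m-1) (n+1) (by omega) (by omega), hfD m (n-1) (by omega) (by omega)]
    have i1 : m + 1 + n + 2 = m + n + 2 + 1 := by ring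
    have i2 : m - 1 + (n + 1) + 2 = m + n + 2 := by ring
    have i3 : m + (n - 1) + 2 = m + n + 2 - 1 := by ring
    have i4 : n - 1 + 1 = n + 1 - 1 := by ring
    rw [i1, i2, i3, i4, ← add_div, ← add_div, ← mul_div_assoc,
      show ptx e a b = u + v + w from rfl, DD_Xrec hu hv hw huvw (m+n+2) (n+1)]
  have hfY : ∀ m n : ℤ, 0 ≤ m → 0 ≤ n →
      pty e a b * f m n = f m (n + 1) + f (m + 1) (n - 1) + f (m - 1) n := by
    intro m n hm hn
    rw [hfD m n (by omega) (by omega), hfD m (n+1) (by omega) (by omega),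
      hfD (m+1) (n-1) (by omega) (by omega), hfD (m-1) n (by omega) (by omega)]
    have i1 : m + (n + 1) + 2 = m + n + 2 + 1 := by ring
    have i2 : m + 1 + (n - 1) + 2 = m + n + 2 := by ring
    have i3 : n - 1 + 1 = n + 1 - 1 := by ring
    have i4 : m - 1 + n + 2 = m + n + 2 - 1 := by ring
    rw [i1, i2, i3, i4, ← add_div, ← add_div, ← mul_div_assoc,
      show pty e a b = u*v + u*w + v*w from rfl, DD_Yrec hu hv hw huvw (m+n+2) (n+1)]
  have hzero : ∀ m n : ℕ, m + n = e + 1 → f (m:ℤ) (n:ℤ) = 0 := by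
    intro m n hmn
    rw [hfD m n (by omega) (by omega)]
    have : (m:ℤ) + n + 2 = (e:ℤ) + 3 := by push_cast; omega
    rw [this, DD_top (uu_pow_N e a b) (vv_pow_N e a b), zero_div]
  intro m n hmn
  rw [cheb_eval_unique hp (ptx e a b) (pty e a b) f hfneg hf0 hfX hfY m n
    (by positivity) (by positivity), hzero m n hmn]
lemma key_div (e : ℕ) {s t : ℤ} (h : om (3*(e+3)) ^ s = om (3*(e+3)) ^ t)
    (hb1 : -(6*((e:ℤ)+3)) < s - t) (hb2 : s - t < 6*((e:ℤ)+3)) :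
    s - t = 0 ∨ s - t = 3*((e:ℤ)+3) ∨ s - t = -(3*((e:ℤ)+3)) := by
  rw [om_zpow_eq_iff _ (by positivity)] at h
  obtain ⟨c, hc⟩ := h
  have hcast : ((3*(e+3) : ℕ) : ℤ) = 3*((e:ℤ)+3) := by push_cast; ring
  rw [hcast] at hc
  have hN : (0:ℤ) < 3*((e:ℤ)+3) := by positivity
  have h2 : c < 2 := by nlinarith
  have h3 : -2 < c := by nlinarith
  have : c = 0 ∨ c = 1 ∨ c = -1 := by omega
  rcases this with rfl | rfl | rfl
  · left; omega
  · right; left; omega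
  · right; right; omega

lemma point_inj (e a b a' b' : ℕ) (hab : a + b ≤ e) (hab' : a' + b' ≤ e)
    (hx : ptx e a b = ptx e a' b') (hy : pty e a b = pty e a' b') :
    a = a' ∧ b = b' := by
  set u := uu e a b
  set v := vv e a b
  set w := ww e a b
  set u' := uu e a' b'
  set v' := vv e a' b'
  set w' := ww e a' b'
  have huvw : u * v * w = 1 := uvw_mul e a b
  have huvw' : u' * v' * w' = 1 := uvw_mul e a' b'
  have hpoly : ∀ z : ℂ, (z - u)*(z - v)*(z - w) = (z - u')*(z - v')*(z - w') := by
    intro z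
    have hx' : u + v + w = u' + v' + w' := hx
    have hy' : u*v + u*w + v*w = u'*v' + u'*w' + v'*w' := hy
    linear_combination (-(z^2))*hx' + z*hy' - huvw + huvw'
  have memf : ∀ z : ℂ, (z - u')*(z - v')*(z - w') = 0 → z = u ∨ z = v ∨ z = w := by
    intro z hz
    have h0 : (z - u)*(z - v)*(z - w) = 0 := by rw [hpoly]; exact hz
    rcases mul_eq_zero.mp h0 with h0 | h0
    · rcases mul_eq_zero.mp h0 with h0 | h0
      · exact Or.inl (sub_eq_zero.mp h0)
      · exact Or.inr (Or.inl (sub_eq_zero.mp h0))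
    · exact Or.inr (Or.inr (sub_eq_zero.mp h0))
  have h1 : u' = u ∨ u' = v ∨ u' = w := memf u' (by ring)
  have h2 : v' = u ∨ v' = v ∨ v' = w := memf v' (by ring)
  have h3 : w' = u ∨ w' = v ∨ w' = w := memf w' (by ring)
  have bnd : ∀ s t : ℤ, -(2*(e:ℤ)+3) ≤ s → s ≤ 2*(e:ℤ)+3 → -(2*(e:ℤ)+3) ≤ t →
      t ≤ 2*(e:ℤ)+3 → om (3*(e+3)) ^ s = om (3*(e+3)) ^ t →
      (s - t = 0 ∨ s - t = 3*((e:ℤ)+3) ∨ s - t = -(3*((e:ℤ)+3))) := by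
    intro s t b1 b2 b3 b4 h
    exact key_div e h (by omega) (by omega)
  rcases h1 with h1 | h1 | h1 <;> rcases h2 with h2 | h2 | h2 <;>
    rcases h3 with h3 | h3 | h3 <;>
  · have g1 := bnd _ _ (by simp only [K1, K2, K3]; omega) (by simp only [K1, K2, K3]; omega)
      (by simp only [K1, K2, K3]; omega) (by simp only [K1, K2, K3]; omega) h1
    have g2 := bnd _ _ (by simp only [K1, K2, K3]; omega) (by simp only [K1, K2, K3]; omega)
      (by simp only [K1, K2, K3]; omega) (by simp only [K1, K2, K3]; omega) h2
    have g3 := bnd _ _ (by simp only [K1, K2, K3]; omega) (by simp only [K1, K2, K3]; omega)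
      (by simp only [K1, K2, K3]; omega) (by simp only [K1, K2, K3]; omega) h3
    simp only [K1, K2, K3] at g1 g2 g3
    omega
def Tset (e : ℕ) : Finset (ℕ × ℕ) :=
  (Finset.range (e+1)).biUnion (fun d => Finset.HasAntidiagonal.antidiagonal d)

lemma mem_Tset (e : ℕ) (ab : ℕ × ℕ) : ab ∈ Tset e ↔ ab.1 + ab.2 ≤ e := by
  simp only [Tset, Finset.mem_biUnion, Finset.mem_range, Finset.HasAntidiagonal.mem_antidiagonal]
  constructor
  · rintro ⟨d, hd, rfl⟩; omega
  · intro h; exact ⟨ab.1 + ab.2, by omega, rfl⟩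

lemma sum_twice (e : ℕ) : (∑ d ∈ Finset.range (e+1), (d+1)) * 2 = (e+1)*(e+2) := by
  induction e with
  | zero => simp
  | succ n ih =>
    rw [Finset.sum_range_succ, add_mul, ih]
    ring

lemma Tset_card (e : ℕ) : (Tset e).card = (e+1)*(e+2)/2 := by
  rw [Tset, Finset.card_biUnion]
  · have h1 : ∀ d ∈ Finset.range (e+1), (Finset.HasAntidiagonal.antidiagonal d).card = d + 1 := by
      intro d _; exact Finset.Nat.card_antidiagonal d
    rw [Finset.sum_congr rfl h1]
    have h2 := sum_twice e
    omega
  · intro x _ y _ hxy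
    simp only [Finset.disjoint_left, Finset.HasAntidiagonal.mem_antidiagonal]
    intro ab h1 h2
    exact hxy (h1 ▸ h2 ▸ rfl)
lemma upper_bound (e : ℕ) {p : ℤ → ℤ → MvPolynomial (Fin 2) ℤ} (hp : IsSl3Cheb p)
    (S : Finset (ℂ × ℂ))
    (hS : ∀ z ∈ S, ∀ m n : ℕ, m + n = e + 1 →
      aeval ![z.1, z.2] (p (m:ℤ) (n:ℤ)) = 0) :
    S.card ≤ (e+1)*(e+2)/2 := by
  classical
  obtain ⟨hneg, h00, h10, h01, hX, hY⟩ := hp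
  set Qp : ℤ → ℤ → MvPolynomial (Fin 2) ℂ :=
    fun m n => map (algebraMap ℤ ℂ) (p m n) with hQp
  set v : Fin 2 → (↥S → ℂ) := fun i z => ![z.val.1, z.val.2] i with hv
  set ev : MvPolynomial (Fin 2) ℂ →ₐ[ℂ] (↥S → ℂ) := aeval v with hev
  have hpt : ∀ (q : MvPolynomial (Fin 2) ℂ) (z : ↥S),
      ev q z = aeval (fun i => v i z) q := by
    intro q z
    have h := comp_aeval (f := v) (φ := Pi.evalAlgHom ℂ (fun _ : ↥S => ℂ) z)
    exact DFunLike.congr_fun h q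
  have hgen : ∀ m n : ℕ, m + n = e + 1 → ev (Qp (m:ℤ) (n:ℤ)) = 0 := by
    intro m n hmn
    funext z
    rw [hpt, hQp]
    simp only [aeval_map_algebraMap]
    have h2 := hS z.val z.2 m n hmn
    rw [Pi.zero_apply]
    exact h2
  have hQneg : ∀ m n : ℤ, m < 0 ∨ n < 0 → Qp m n = 0 := by
    intro m n h; simp [hQp, hneg m n h]
  have hQ00 : Qp 0 0 = 1 := by simp [hQp, h00]
  have hQX : ∀ m n : ℤ, 0 ≤ m → 0 ≤ n →
      X 0 * Qp m n = Qp (m+1) n + Qp (m-1) (n+1) + Qp m (n-1) := by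
    intro m n hm hn
    have := congrArg (map (algebraMap ℤ ℂ)) (hX m n hm hn)
    simpa [hQp] using this
  have hQY : ∀ m n : ℤ, 0 ≤ m → 0 ≤ n →
      X 1 * Qp m n = Qp m (n+1) + Qp (m+1) (n-1) + Qp (m-1) n := by
    intro m n hm hn
    have := congrArg (map (algebraMap ℤ ℂ)) (hY m n hm hn)
    simpa [hQp] using this
  set G : Finset (↥S → ℂ) := (Tset e).image (fun ab => ev (Qp (ab.1:ℤ) (ab.2:ℤ))) with hG
  set W : Submodule ℂ (↥S → ℂ) := Submodule.span ℂ (G : Set (↥S → ℂ)) with hW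
  have hWgen : ∀ a b : ℕ, a + b ≤ e → ev (Qp (a:ℤ) (b:ℤ)) ∈ W := by
    intro a b hab
    apply Submodule.subset_span
    simp only [hG, Finset.coe_image, Set.mem_image, Finset.mem_coe]
    exact ⟨(a, b), (mem_Tset e (a,b)).mpr hab, rfl⟩
  have hWall : ∀ a b : ℕ, a + b ≤ e + 1 → ev (Qp (a:ℤ) (b:ℤ)) ∈ W := by
    intro a b hab
    rcases le_or_gt (a+b) e with h | h
    · exact hWgen a b h
    · rw [hgen a b (by omega)]; exact W.zero_mem
  have hmulgen : ∀ (i : Fin 2) (x : ↥S → ℂ), x ∈ (G : Set (↥S → ℂ)) →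
      ev (X i) * x ∈ W := by
    intro i x hx
    simp only [hG, Finset.coe_image, Set.mem_image, Finset.mem_coe] at hx
    obtain ⟨ab, habT, rfl⟩ := hx
    obtain ⟨a, b⟩ := ab
    have hab : a + b ≤ e := (mem_Tset e (a,b)).mp habT
    rw [← map_mul]
    fin_cases i
    · show ev (X 0 * Qp (a:ℤ) (b:ℤ)) ∈ W
      rw [hQX (a:ℤ) (b:ℤ) (by positivity) (by positivity), map_add, map_add]
      refine W.add_mem (W.add_mem ?_ ?_) ?_
      · have hc : ((a:ℤ) + 1) = ((a + 1 : ℕ) : ℤ) := by push_cast; ring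
        rw [hc]
        exact hWall (a+1) b (by omega)
      · rcases Nat.eq_zero_or_pos a with h0 | h0
        · subst h0
          rw [hQneg _ _ (Or.inl (by norm_num)), map_zero]
          exact W.zero_mem
        · have hc : ((a:ℤ) - 1) = ((a - 1 : ℕ) : ℤ) := by omega
          have hc2 : ((b:ℤ) + 1) = ((b + 1 : ℕ) : ℤ) := by push_cast; ring
          rw [hc, hc2]
          exact hWall (a-1) (b+1) (by omega)
      · rcases Nat.eq_zero_or_pos b with h0 | h0
        · subst h0
          rw [hQneg _ _ (Or.inr (by norm_num)), map_zero]
          exact W.zero_mem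
        · have hc : ((b:ℤ) - 1) = ((b - 1 : ℕ) : ℤ) := by omega
          rw [hc]
          exact hWall a (b-1) (by omega)
    · show ev (X 1 * Qp (a:ℤ) (b:ℤ)) ∈ W
      rw [hQY (a:ℤ) (b:ℤ) (by positivity) (by positivity), map_add, map_add]
      refine W.add_mem (W.add_mem ?_ ?_) ?_
      · have hc : ((b:ℤ) + 1) = ((b + 1 : ℕ) : ℤ) := by push_cast; ring
        rw [hc]
        exact hWall a (b+1) (by omega)
      · rcases Nat.eq_zero_or_pos b with h0 | h0
        · subst h0
          rw [hQneg _ _ (Or.inr (by norm_num)), map_zero]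
          exact W.zero_mem
        · have hc : ((b:ℤ) - 1) = ((b - 1 : ℕ) : ℤ) := by omega
          have hc2 : ((a:ℤ) + 1) = ((a + 1 : ℕ) : ℤ) := by push_cast; ring
          rw [hc, hc2]
          exact hWall (a+1) (b-1) (by omega)
      · rcases Nat.eq_zero_or_pos a with h0 | h0
        · subst h0
          rw [hQneg _ _ (Or.inl (by norm_num)), map_zero]
          exact W.zero_mem
        · have hc : ((a:ℤ) - 1) = ((a - 1 : ℕ) : ℤ) := by omega
          rw [hc]
          exact hWall (a-1) b (by omega)
  have hmulW : ∀ (i : Fin 2) (g : ↥S → ℂ), g ∈ W → ev (X i) * g ∈ W := by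
    intro i g hg
    have hle : W.map (LinearMap.mulLeft ℂ (ev (X i))) ≤ W := by
      rw [hW, Submodule.map_span, Submodule.span_le]
      rintro _ ⟨x, hx, rfl⟩
      exact hmulgen i x hx
    exact hle (Submodule.mem_map_of_mem hg)
  have hall : ∀ q : MvPolynomial (Fin 2) ℂ, ev q ∈ W := by
    intro q
    induction q using MvPolynomial.induction_on with
    | C c =>
      have hc : (C c : MvPolynomial (Fin 2) ℂ) = c • Qp 0 0 := by
        rw [hQ00, smul_eq_C_mul, mul_one]
      rw [hc, map_smul]
      refine W.smul_mem c ?_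
      simpa using hWall 0 0 (by omega)
    | add f g hf hg => rw [map_add]; exact W.add_mem hf hg
    | mul_X f i hf => rw [map_mul, mul_comm]; exact hmulW i _ hf
  -- interpolation: indicators are in the range of ev
  have hsep : ∀ z0 z1 : ℂ × ℂ, z0 ≠ z1 → ∃ q : MvPolynomial (Fin 2) ℂ,
      aeval ![z0.1, z0.2] q = 1 ∧ aeval ![z1.1, z1.2] q = 0 := by
    intro z0 z1 hne
    by_cases h : z0.1 = z1.1
    · have h2 : z0.2 ≠ z1.2 := fun hc => hne (Prod.ext h hc)
      refine ⟨C (z0.2 - z1.2)⁻¹ * (X 1 - C z1.2), ?_, ?_⟩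
      · simp only [map_mul, map_sub, aeval_C, aeval_X]
        simp only [Matrix.cons_val_one, Matrix.head_cons]
        rw [Algebra.algebraMap_self_apply, Algebra.algebraMap_self_apply]
        exact inv_mul_cancel₀ (sub_ne_zero.mpr h2)
      · simp only [map_mul, map_sub, aeval_C, aeval_X]
        simp only [Matrix.cons_val_one, Matrix.head_cons]
        rw [Algebra.algebraMap_self_apply, Algebra.algebraMap_self_apply]
        simp
    · refine ⟨C (z0.1 - z1.1)⁻¹ * (X 0 - C z1.1), ?_, ?_⟩
      · simp only [map_mul, map_sub, aeval_C, aeval_X]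
        simp only [Matrix.cons_val_zero]
        rw [Algebra.algebraMap_self_apply, Algebra.algebraMap_self_apply]
        exact inv_mul_cancel₀ (sub_ne_zero.mpr h)
      · simp only [map_mul, map_sub, aeval_C, aeval_X]
        simp only [Matrix.cons_val_zero]
        rw [Algebra.algebraMap_self_apply, Algebra.algebraMap_self_apply]
        simp
  have hsep' : ∀ z0 z1 : ℂ × ℂ, ∃ q : MvPolynomial (Fin 2) ℂ,
      aeval ![z0.1, z0.2] q = 1 ∧ (z0 ≠ z1 → aeval ![z1.1, z1.2] q = 0) := by
    intro z0 z1
    by_cases h : z0 = z1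
    · exact ⟨1, by simp, fun hc => absurd h hc⟩
    · obtain ⟨q, h1, h2⟩ := hsep z0 z1 h
      exact ⟨q, h1, fun _ => h2⟩
  choose sep hsep1 hsep2 using hsep'
  have hind : ∀ z0 : ↥S, ∃ q, ev q = fun z => if z = z0 then 1 else 0 := by
    intro z0
    refine ⟨∏ z1 ∈ Finset.univ.erase z0, sep z0.val z1.val, ?_⟩
    funext z
    rw [hpt, map_prod]
    by_cases hz : z = z0
    · subst hz
      rw [if_pos rfl]
      apply Finset.prod_eq_one
      intro z1 _
      exact hsep1 z.val z1.val
    · rw [if_neg hz]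
      apply Finset.prod_eq_zero (Finset.mem_erase.mpr ⟨hz, Finset.mem_univ z⟩)
      exact hsep2 z0.val z.val (fun hc => hz (Subtype.ext hc.symm))
  have htop : ∀ f : ↥S → ℂ, f ∈ W := by
    intro f
    choose qz hqz using hind
    have hf : f = ev (∑ z0 ∈ Finset.univ, f z0 • qz z0) := by
      rw [map_sum]
      funext z
      rw [Finset.sum_apply]
      have : ∀ z0 ∈ Finset.univ, ev (f z0 • qz z0) z
          = f z0 * (if z = z0 then 1 else 0) := by
        intro z0 _
        rw [map_smul, Pi.smul_apply, hqz z0, smul_eq_mul]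
      rw [Finset.sum_congr rfl this]
      simp [Finset.sum_ite_eq]
    rw [hf]
    exact hall _
  have hWtop : W = ⊤ := eq_top_iff.mpr (fun f _ => htop f)
  have h1 : S.card = Module.finrank ℂ (↥S → ℂ) := by
    rw [Module.finrank_pi ℂ, Fintype.card_coe]
  have h2 : Module.finrank ℂ (↥S → ℂ) ≤ G.card := by
    have hle := finrank_span_finset_le_card (R := ℂ) G
    rw [Set.finrank] at hle
    calc Module.finrank ℂ (↥S → ℂ)
        = Module.finrank ℂ (⊤ : Submodule ℂ (↥S → ℂ)) := (finrank_top ℂ _).symm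
      _ = Module.finrank ℂ W := by rw [hWtop]
      _ ≤ G.card := hle
  have h3 : G.card ≤ (Tset e).card := Finset.card_image_le
  rw [Tset_card] at h3
  omega
/-- The vanishing set `V_e ⊂ ℂ²` of common zeros of the `sl₃` Chebyshev polynomials
`p_{m,n}` with `m + n = e + 1` has exactly `t_e = (e+1)(e+2)/2` points. -/
theorem stmt_5 (e : ℕ) (p : ℤ → ℤ → MvPolynomial (Fin 2) ℤ) (hp : IsSl3Cheb p) :
    {z : ℂ × ℂ | ∀ m n : ℕ, m + n = e + 1 →
      MvPolynomial.aeval ![z.1, z.2] (p (m : ℤ) (n : ℤ)) = 0}.ncard =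
      (e + 1) * (e + 2) / 2 := by
  classical
  set Z := {z : ℂ × ℂ | ∀ m n : ℕ, m + n = e + 1 →
      MvPolynomial.aeval ![z.1, z.2] (p (m : ℤ) (n : ℤ)) = 0} with hZ
  set F : Finset (ℂ × ℂ) :=
    (Tset e).image (fun ab => (ptx e ab.1 ab.2, pty e ab.1 ab.2)) with hF
  have hFcard : F.card = (e + 1) * (e + 2) / 2 := by
    rw [hF, Finset.card_image_of_injOn, Tset_card]
    intro ab hab ab' hab' h
    have h1 : ptx e ab.1 ab.2 = ptx e ab'.1 ab'.2 := congrArg Prod.fst h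
    have h2 : pty e ab.1 ab.2 = pty e ab'.1 ab'.2 := congrArg Prod.snd h
    obtain ⟨ha, hb⟩ := point_inj e ab.1 ab.2 ab'.1 ab'.2
      ((mem_Tset e ab).mp (Finset.mem_coe.mp hab))
      ((mem_Tset e ab').mp (Finset.mem_coe.mp hab')) h1 h2
    exact Prod.ext ha hb
  have hFsub : (F : Set (ℂ × ℂ)) ⊆ Z := by
    intro z hz
    simp only [hF, Finset.coe_image, Set.mem_image, Finset.mem_coe] at hz
    obtain ⟨ab, habT, rfl⟩ := hz
    intro m n hmn
    exact point_mem e ab.1 ab.2 ((mem_Tset e ab).mp habT) hp m n hmn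
  have hupper : ∀ S : Finset (ℂ × ℂ), (S : Set (ℂ × ℂ)) ⊆ Z →
      S.card ≤ (e + 1) * (e + 2) / 2 := by
    intro S hSsub
    exact upper_bound e hp S (fun z hzS m n hmn => hSsub hzS m n hmn)
  have hfin : Z.Finite := by
    by_contra hinf
    have hinf' : Z.Infinite := hinf
    obtain ⟨T, hTsub, hTcard⟩ :=
      hinf'.exists_subset_card_eq ((e + 1) * (e + 2) / 2 + 1)
    have := hupper T hTsub
    omega
  have hle : Z.ncard ≤ (e + 1) * (e + 2) / 2 := by
    rw [Set.ncard_eq_toFinset_card Z hfin]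
    exact hupper hfin.toFinset (by simp)
  have hge : (e + 1) * (e + 2) / 2 ≤ Z.ncard := by
    calc (e + 1) * (e + 2) / 2 = F.card := hFcard.symm
      _ = (F : Set (ℂ × ℂ)).ncard := (Set.ncard_coe_finset F).symm
      _ ≤ Z.ncard := Set.ncard_le_ncard hFsub hfin
  omega
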